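/- For 0 < q < 1, the average code length of the limit code C_∞ under the two-dimensional geometric distribution with parameter q equals 1 + (1/(1-q)) \sum_{t\ge 0} q^{2^t} (2^t (1-q) + 2). -/

import Mathlib

open Finset

private noncomputable def Fc (q : ℝ) (s u : ℕ) : ℝ :=
  if 2 ^ u ≤ s + 1 then q ^ s * (((s : ℝ) + 2) * ((s : ℝ) + 1 - (2 : ℝ) ^ u)) else 0

private lemma Fc_nonneg {q : ℝ} (hq : 0 ≤ q) (s u : ℕ) : 0 ≤ Fc q s u := by
  unfold Fc
  split
  · rename_i h
    have h2 : ((2 : ℝ) ^ u) ≤ (s : ℝ) + 1 := by exact_mod_cast h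
    exact mul_nonneg (pow_nonneg hq s)
      (mul_nonneg (by positivity) (by linarith))
  · exact le_rfl

theorem stmt_15 (q : ℝ) (hq : 0 < q) (hq1 : q < 1) :
    (∑' s : ℕ,
      (1 - q) ^ 2 * q ^ s *
        (((((Nat.log 2 (s + 1) : ℝ)) - 1) * ((s : ℝ) + 2) +
            2 * ((s + 1 - 2 ^ Nat.log 2 (s + 1) : ℕ) : ℝ) + 2) * ((s : ℝ) + 1) +
          2 * ((s + 1 - 2 ^ Nat.log 2 (s + 1) : ℕ) : ℝ) + 1))
      = 1 + (1 / (1 - q)) * ∑' t : ℕ, q ^ (2 ^ t) * ((2 : ℝ) ^ t * (1 - q) + 2) := by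
  have hc : (0:ℝ) < 1 - q := by linarith
  have hc0 : (1:ℝ) - q ≠ 0 := ne_of_gt hc
  have hnorm : ‖q‖ < 1 := by rw [Real.norm_eq_abs, abs_of_pos hq]; exact hq1
  -- basic geometric-type sums
  have h0 : HasSum (fun n : ℕ => q ^ n) (1 / (1 - q)) := by
    simpa using hasSum_geometric_of_lt_one hq.le hq1
  have h1 : HasSum (fun n : ℕ => ((n:ℝ)+1) * q ^ n) (1 / (1 - q)^2) := by
    simpa using hasSum_choose_mul_geometric_of_norm_lt_one (𝕜 := ℝ) 1 hnorm
  have h2 : HasSum (fun n : ℕ => ((n:ℝ)+1) * ((n:ℝ)+2) * q ^ n) (2 / (1 - q)^3) := by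
    have h := (hasSum_choose_mul_geometric_of_norm_lt_one (𝕜 := ℝ) 2 hnorm).mul_left 2
    convert h using 1
    · rfl
    · funext n
      have h2n : 2 * (n+2).choose 2 = (n+1)*(n+2) := by
        have hd : 2 ∣ (n+2)*(n+1) := by
          rw [mul_comm]; exact (Nat.even_mul_succ_self (n+1)).two_dvd
        rw [Nat.choose_two_right, show n+2-1 = n+1 from rfl, Nat.mul_div_cancel' hd]
        ring
      have h3 : (2:ℝ) * (((n+2).choose 2 : ℕ) : ℝ) = ((n:ℝ)+1)*((n:ℝ)+2) := by
        exact_mod_cast congrArg (fun m : ℕ => (m:ℝ)) h2n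
      rw [← h3]; ring
    · rw [pow_succ]; ring
  have hone : ∀ u : ℕ, 1 ≤ 2 ^ u := fun u => Nat.one_le_two_pow
  -- the value of row u
  set A : ℕ → ℝ := fun u =>
    q ^ (2^u - 1) * (2/(1-q)^3 + ((2:ℝ)^u - 2) * (1/(1-q)^2) - (2:ℝ)^u * (1/(1-q))) with hA
  have row : ∀ u : ℕ, HasSum (fun k : ℕ => Fc q (2^u - 1 + k) u) (A u) := by
    intro u
    have h := (((h2.add (h1.mul_left ((2:ℝ)^u - 2))).sub (h0.mul_left ((2:ℝ)^u)))).mul_left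
      (q ^ (2^u - 1))
    have hfun : (fun k : ℕ => q ^ (2^u - 1) *
        ((((k:ℝ)+1) * ((k:ℝ)+2) * q ^ k + ((2:ℝ)^u - 2) * (((k:ℝ)+1) * q ^ k))
          - (2:ℝ)^u * q ^ k))
        = fun k : ℕ => Fc q (2^u - 1 + k) u := by
      funext k
      have hcond : 2 ^ u ≤ 2^u - 1 + k + 1 := by have := hone u; omega
      have hcast : ((2^u - 1 + k : ℕ) : ℝ) = (2:ℝ)^u - 1 + k := by
        rw [Nat.cast_add, Nat.cast_sub (hone u)]; push_cast; ring
      simp only [Fc]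
      rw [if_pos hcond, pow_add, hcast]
      ring
    rw [← hfun]
    exact h
  -- summability of A
  have hSA : Summable A := by
    set C1 : ℝ := 2/(1-q)^3 - 1/(1-q)^2 - 1/(1-q) with hC1
    set C2 : ℝ := 1/(1-q)^2 - 1/(1-q) with hC2
    have SB : Summable (fun n : ℕ => q^n * C1 + ((n:ℝ) * q^n) * C2) :=
      (h0.summable.mul_right C1).add
        ((hasSum_coe_mul_geometric_of_norm_lt_one hnorm).summable.mul_right C2)
    have hinj : Function.Injective (fun u : ℕ => 2^u - 1) := by
      intro a b hab
      simp only at hab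
      have ha := hone a; have hb := hone b
      have : (2:ℕ)^a = 2^b := by omega
      exact Nat.pow_right_injective le_rfl this
    have := SB.comp_injective hinj
    apply this.congr
    intro u
    have hcast : ((2^u - 1 : ℕ) : ℝ) = (2:ℝ)^u - 1 := by
      rw [Nat.cast_sub (hone u)]; push_cast; ring
    simp only [Function.comp_apply, hA, hC1, hC2, hcast]
    ring
  -- the reindexing injection
  set e : ℕ × ℕ → ℕ × ℕ := fun p => (p.1, 2^p.1 - 1 + p.2) with he
  have einj : Function.Injective e := by
    rintro ⟨a, b⟩ ⟨c, d⟩ h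
    have h1' : a = c := congrArg Prod.fst h
    subst h1'
    have h2' : 2^a - 1 + b = 2^a - 1 + d := congrArg Prod.snd h
    have : b = d := by omega
    rw [this]
  have hz : ∀ p ∉ Set.range e, (fun p : ℕ × ℕ => Fc q p.2 p.1) p = 0 := by
    rintro ⟨u, s⟩ hp
    by_contra hne
    have hcond : 2 ^ u ≤ s + 1 := by
      by_contra hcc
      exact hne (by simp [Fc, hcc])
    refine hp ⟨(u, s + 1 - 2^u), ?_⟩
    simp only [he]
    have hs : 2^u - 1 + (s + 1 - 2^u) = s := by have := hone u; omega
    simp [hs]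
  have hrowS : ∀ u : ℕ, Summable (fun k : ℕ => Fc q (2^u - 1 + k) u) :=
    fun u => (row u).summable
  have hcompS : Summable ((fun p : ℕ × ℕ => Fc q p.2 p.1) ∘ e) := by
    rw [show ((fun p : ℕ × ℕ => Fc q p.2 p.1) ∘ e)
        = fun p : ℕ × ℕ => Fc q (2^p.1 - 1 + p.2) p.1 from rfl]
    refine (summable_prod_of_nonneg ?_).mpr ⟨fun u => hrowS u, ?_⟩
    · intro p; exact Fc_nonneg hq.le _ _
    · exact hSA.congr fun u => ((row u).tsum_eq).symm
  have hfswap : Summable (fun p : ℕ × ℕ => Fc q p.2 p.1) :=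
    (einj.summable_iff hz).mp hcompS
  have hf : Summable (fun p : ℕ × ℕ => Fc q p.1 p.2) := hfswap.prod_symm
  have hnn : (0:ℕ × ℕ → ℝ) ≤ fun p : ℕ × ℕ => Fc q p.1 p.2 := by
    intro p; exact Fc_nonneg hq.le _ _
  have hg : Summable (fun s : ℕ => ∑' u : ℕ, Fc q s u) :=
    ((summable_prod_of_nonneg hnn).mp hf).2
  have hrowfin : ∀ s : ℕ, Summable (fun u : ℕ => Fc q s u) := by
    intro s
    apply summable_of_ne_finset_zero (s := Finset.range (Nat.log 2 (s+1) + 1))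
    intro u hu
    rw [Finset.mem_range, not_lt] at hu
    have hlt : s + 1 < 2 ^ u := by
      calc s + 1 < 2 ^ (Nat.log 2 (s+1) + 1) := Nat.lt_pow_succ_log_self (by norm_num) _
        _ ≤ 2 ^ u := Nat.pow_le_pow_right (by norm_num) hu
    have hcc : ¬ 2 ^ u ≤ s + 1 := by omega
    simp [Fc, hcc]
  -- the key double-sum identity
  have hT : ∑' u : ℕ, A u = ∑' s : ℕ, ∑' u : ℕ, Fc q s u := by
    calc ∑' u : ℕ, A u
        = ∑' u : ℕ, ∑' k : ℕ, ((fun p : ℕ × ℕ => Fc q p.2 p.1) ∘ e) (u, k) :=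
          tsum_congr fun u => ((row u).tsum_eq).symm
      _ = ∑' p : ℕ × ℕ, ((fun p : ℕ × ℕ => Fc q p.2 p.1) ∘ e) p :=
          (Summable.tsum_prod' hcompS fun u => hrowS u).symm
      _ = ∑' p : ℕ × ℕ, Fc q p.2 p.1 := einj.tsum_eq (Function.support_subset_iff'.mpr hz)
      _ = ∑' p : ℕ × ℕ, Fc q p.1 p.2 := ((Equiv.prodComm ℕ ℕ).tsum_eq
          (fun p : ℕ × ℕ => Fc q p.2 p.1)).symm
      _ = ∑' s : ℕ, ∑' u : ℕ, Fc q s u := Summable.tsum_prod' hf hrowfin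
  -- pointwise rewriting of the summand
  have key : ∀ s : ℕ,
      (1 - q) ^ 2 * q ^ s *
        (((((Nat.log 2 (s + 1) : ℝ)) - 1) * ((s : ℝ) + 2) +
            2 * ((s + 1 - 2 ^ Nat.log 2 (s + 1) : ℕ) : ℝ) + 2) * ((s : ℝ) + 1) +
          2 * ((s + 1 - 2 ^ Nat.log 2 (s + 1) : ℕ) : ℝ) + 1)
      = (1 - q)^2 * (((s:ℝ)+1) * q ^ s + ∑' u : ℕ, Fc q s u) := by
    intro s
    set t : ℕ := Nat.log 2 (s + 1) with ht
    have hts : 2 ^ t ≤ s + 1 := Nat.pow_log_le_self 2 (Nat.succ_ne_zero s)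
    have htsum : ∑' u : ℕ, Fc q s u = ∑ u ∈ Finset.range (t + 1), Fc q s u := by
      apply tsum_eq_sum
      intro u hu
      rw [Finset.mem_range, not_lt] at hu
      have hlt : s + 1 < 2 ^ u := by
        calc s + 1 < 2 ^ (t + 1) := Nat.lt_pow_succ_log_self (by norm_num) _
          _ ≤ 2 ^ u := Nat.pow_le_pow_right (by norm_num) hu
      have hcc : ¬ 2 ^ u ≤ s + 1 := by omega
      simp [Fc, hcc]
    have hsumeval : ∑ u ∈ Finset.range (t + 1), Fc q s u
        = ((t:ℝ)+1) * (q^s * (((s:ℝ)+2) * ((s:ℝ)+1)))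
          - q^s * (((s:ℝ)+2) * ((2:ℝ)^(t+1) - 1)) := by
      have hgeo : ∑ u ∈ Finset.range (t+1), (2:ℝ)^u = 2^(t+1) - 1 := by
        induction (t+1) with
        | zero => simp
        | succ k ih => rw [Finset.sum_range_succ, ih]; ring
      calc ∑ u ∈ Finset.range (t + 1), Fc q s u
          = ∑ u ∈ Finset.range (t + 1),
            (q^s * (((s:ℝ)+2) * ((s:ℝ)+1)) - q^s * ((s:ℝ)+2) * (2:ℝ)^u) := by
            apply Finset.sum_congr rfl
            intro u hu
            rw [Finset.mem_range] at hu
            have hcond : 2 ^ u ≤ s + 1 :=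
              le_trans (Nat.pow_le_pow_right (by norm_num) (by omega)) hts
            simp only [Fc]
            rw [if_pos hcond]; ring
        _ = _ := by
            rw [Finset.sum_sub_distrib, Finset.sum_const, ← Finset.mul_sum, hgeo]
            simp only [Finset.card_range, nsmul_eq_mul]
            push_cast
            ring
    have hr : ((s + 1 - 2 ^ t : ℕ) : ℝ) = (s:ℝ) + 1 - (2:ℝ)^t := by
      rw [Nat.cast_sub hts]; push_cast; ring
    rw [htsum, hsumeval, hr, pow_succ]
    ring
  -- assemble
  calc (∑' s : ℕ,
      (1 - q) ^ 2 * q ^ s *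
        (((((Nat.log 2 (s + 1) : ℝ)) - 1) * ((s : ℝ) + 2) +
            2 * ((s + 1 - 2 ^ Nat.log 2 (s + 1) : ℕ) : ℝ) + 2) * ((s : ℝ) + 1) +
          2 * ((s + 1 - 2 ^ Nat.log 2 (s + 1) : ℕ) : ℝ) + 1))
      = ∑' s : ℕ, (1 - q)^2 * (((s:ℝ)+1) * q ^ s + ∑' u : ℕ, Fc q s u) :=
        tsum_congr key
    _ = (1 - q)^2 * ∑' s : ℕ, (((s:ℝ)+1) * q ^ s + ∑' u : ℕ, Fc q s u) := tsum_mul_left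
    _ = (1 - q)^2 * (∑' s : ℕ, ((s:ℝ)+1) * q ^ s + ∑' s : ℕ, ∑' u : ℕ, Fc q s u) := by
        rw [Summable.tsum_add h1.summable hg]
    _ = 1 + (1 / (1 - q)) * ∑' t : ℕ, q ^ (2 ^ t) * ((2 : ℝ) ^ t * (1 - q) + 2) := by
        rw [h1.tsum_eq, ← hT]
        have e1 : ((1:ℝ) - q)^2 * (1/(1-q)^2) = 1 := by field_simp
        have e2 : (1 - q)^2 * (∑' u : ℕ, A u)
            = (1/(1-q)) * ∑' u : ℕ, q ^ (2 ^ u) * ((2 : ℝ) ^ u * (1 - q) + 2) := by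
          rw [← tsum_mul_left, ← tsum_mul_left]
          apply tsum_congr
          intro u
          have hq2 : q ^ (2^u) = q ^ (2^u - 1) * q := by
            rw [← pow_succ]
            congr 1
            have := hone u; omega
          rw [hA, hq2]
          field_simp
          ring
        rw [mul_add, e1, e2]
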